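/- arXiv:2304.13475 — 5 statements merged into one kernel-verified Lean document; each statement's English description precedes it below -/
import Mathlib

section
/- If B is a skew left brace, then H_B = {(b, λ_b) : b ∈ B} is a regular subgroup of the holomorph Hol(B,+) = (B,+) ⋊ Aut(B,+), and H_B is isomorphic as a group to the multiplicative group (B,·). -/
/-- A skew left brace: a set with two group structures `(B,+)` and `(B,·)`
satisfying `a * (b + c) = a * b - a + a * c`. -/
class SkewBrace (B : Type*) extends AddGroup B, Group B where
  mul_add_dist : ∀ a b c : B, a * (b + c) = a * b - a + a * c

namespace SkewBraceDefs

variable {B : Type*} [SkewBrace B]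

/-- The lambda map `λ_a(b) = -a + a * b`. -/
def lam (a b : B) : B := -a + a * b

/-- A subbrace: a subgroup of both group structures. -/
def IsSubbrace (S : Set B) : Prop :=
  (∃ A : AddSubgroup B, (A : Set B) = S) ∧ (∃ M : Subgroup B, (M : Set B) = S)

/-- An ideal: a left ideal that is normal in both groups. -/
def IsIdeal (I : Set B) : Prop :=
  (∃ A : AddSubgroup B, (A : Set B) = I ∧ A.Normal) ∧
  (∃ M : Subgroup B, (M : Set B) = I ∧ M.Normal) ∧
  ∀ b : B, ∀ x ∈ I, lam b x ∈ I

/-- A maximal subbrace. -/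
def IsMaximalSubbrace (S : Set B) : Prop :=
  IsSubbrace S ∧ S ≠ Set.univ ∧
    ∀ T : Set B, IsSubbrace T → S ⊆ T → T = S ∨ T = Set.univ

/-- The centre `ζ(B) = {a | a + b = b + a = a·b = b·a for all b}` of a skew brace. -/
def zeta (B : Type*) [SkewBrace B] : Set B :=
  {a : B | ∀ b : B, a + b = b + a ∧ a * b = a + b ∧ b * a = a + b}

/-- The commutator `[I,J]`: the smallest ideal containing additive commutators,
multiplicative commutators, and the elements `i * j - (i + j)`. -/
def commIdeal (I J : Set B) : Set B :=
  ⋂₀ {K : Set B | IsIdeal K ∧ ∀ i ∈ I, ∀ j ∈ J,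
      i + j - i - j ∈ K ∧ i * j * i⁻¹ * j⁻¹ ∈ K ∧ i * j - (i + j) ∈ K}

/-- The Frattini subbrace: intersection of all maximal subbraces
(`Set.univ` if there are none). -/
def Frattini (B : Type*) [SkewBrace B] : Set B :=
  ⋂₀ {S : Set B | IsMaximalSubbrace S}

/-- `I` is an ideal of the subbrace `S`. -/
def IsIdealOf (I S : Set B) : Prop :=
  I ⊆ S ∧ (0 : B) ∈ I ∧ (∀ x ∈ I, ∀ y ∈ I, x + y ∈ I) ∧ (∀ x ∈ I, -x ∈ I) ∧
  (∀ x ∈ I, ∀ y ∈ I, x * y ∈ I) ∧ (∀ x ∈ I, x⁻¹ ∈ I) ∧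
  (∀ s ∈ S, ∀ x ∈ I, s + x - s ∈ I) ∧ (∀ s ∈ S, ∀ x ∈ I, s * x * s⁻¹ ∈ I) ∧
  (∀ s ∈ S, ∀ x ∈ I, lam s x ∈ I)

/-- An abelian ideal series `B = I 0 ⊇ I 1 ⊇ ... ⊇ I n = 0`, each `I (i+1)` an
ideal of `I i` with abelian factor brace `I i / I (i+1)`. -/
def IsAbelianSeries (I : ℕ → Set B) (n : ℕ) : Prop :=
  I 0 = Set.univ ∧ I n = {0} ∧
  ∀ i < n, IsIdealOf (I (i + 1)) (I i) ∧
    ∀ a ∈ I i, ∀ b ∈ I i,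
      -(b + a) + (a + b) ∈ I (i + 1) ∧ -(a + b) + a * b ∈ I (i + 1)

/-- Solubility of a skew brace: existence of an abelian ideal series. -/
def IsSoluble (B : Type*) [SkewBrace B] : Prop :=
  ∃ n : ℕ, ∃ I : ℕ → Set B, IsAbelianSeries I n

/-- The derived series `∂_0(B) = B`, `∂_{n+1}(B) = [∂_n(B), ∂_n(B)]`. -/
def derivedSeries (B : Type*) [SkewBrace B] : ℕ → Set B
  | 0 => Set.univ
  | n + 1 => commIdeal (derivedSeries B n) (derivedSeries B n)

end SkewBraceDefs

open SkewBraceDefs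

/-- The holomorph of the additive group `(B,+)`, as a semidirect product of
`(B,+)` (viewed multiplicatively) with its automorphism group. -/
abbrev AddHolomorph (B : Type*) [AddGroup B] :=
  SemidirectProduct (Multiplicative B) (MulAut (Multiplicative B))
    (MonoidHom.id (MulAut (Multiplicative B)))

namespace SBAux
variable {B : Type*} [SkewBrace B]

lemma mul_zero' (a : B) : a * (0:B) = a := by
  have h := SkewBrace.mul_add_dist a 0 0
  rw [add_zero, sub_eq_add_neg] at h
  have h2 : a * 0 + 0 = a * 0 + (-a + a * 0) := by
    rw [add_zero, ← add_assoc]; exact h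
  have h3 := add_left_cancel h2
  have h4 := congrArg (a + ·) h3
  simpa [← add_assoc] using h4.symm

lemma one_eq_zero : (1 : B) = 0 := by
  have h := SkewBrace.mul_add_dist (1:B) 0 0
  simp only [one_mul, add_zero, sub_eq_add_neg, zero_add] at h
  have := congrArg ((1:B) + ·) h
  simpa [← add_assoc] using this

lemma mul_neg' (a b : B) : a * (-b) = a + -(a * b) + a := by
  have h := SkewBrace.mul_add_dist a b (-b)
  rw [add_neg_cancel, mul_zero', sub_eq_add_neg] at h
  have := congrArg (fun x => a + -(a*b) + x) h
  simp only [← add_assoc] at this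
  simpa [add_assoc] using this.symm

lemma lam_add (a b c : B) : lam a (b + c) = lam a b + lam a c := by
  simp only [lam, SkewBrace.mul_add_dist, sub_eq_add_neg, ← add_assoc]

lemma lam_lam (a b c : B) : lam a (lam b c) = lam (a * b) c := by
  simp only [lam]
  rw [SkewBrace.mul_add_dist, mul_neg', mul_assoc, sub_eq_add_neg]
  simp [← add_assoc]

lemma lam_one' (c : B) : lam (1:B) c = c := by
  simp [lam, one_eq_zero (B := B)]

/-- `λ_a` as a multiplicative automorphism of `Multiplicative B`. -/
def Lam (a : B) : MulAut (Multiplicative B) where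
  toFun x := Multiplicative.ofAdd (lam a x.toAdd)
  invFun x := Multiplicative.ofAdd (lam a⁻¹ x.toAdd)
  left_inv x := by simp [lam_lam, lam_one']
  right_inv x := by simp [lam_lam, lam_one']
  map_mul' x y := by
    show Multiplicative.ofAdd (lam a (x.toAdd + y.toAdd)) = _
    rw [lam_add]; rfl

@[simp] lemma Lam_apply (a c : B) :
    Lam a (Multiplicative.ofAdd c) = Multiplicative.ofAdd (lam a c) := rfl

/-- The embedding `b ↦ (b, λ_b)` as a monoid hom from `(B,·)`. -/
def emb : B →* AddHolomorph B where
  toFun b := ⟨Multiplicative.ofAdd b, Lam b⟩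
  map_one' := by
    refine SemidirectProduct.ext ?_ ?_
    · show Multiplicative.ofAdd (1:B) = 1
      rw [one_eq_zero]; rfl
    · show Lam (1:B) = 1
      ext x
      show Multiplicative.ofAdd (lam 1 x.toAdd) = x
      rw [lam_one']; simp
  map_mul' a b := by
    refine SemidirectProduct.ext ?_ ?_
    · show Multiplicative.ofAdd (a * b) = Multiplicative.ofAdd a * Lam a (Multiplicative.ofAdd b)
      rw [Lam_apply]
      show Multiplicative.ofAdd (a*b) = Multiplicative.ofAdd (a + lam a b)
      rw [lam, ← add_assoc, add_neg_cancel, zero_add]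
    · ext x
      show Multiplicative.ofAdd (lam (a*b) x.toAdd) = (Lam a * Lam b) x
      show _ = Lam a (Lam b x)
      rw [show Lam b x = Multiplicative.ofAdd (lam b x.toAdd) from rfl, Lam_apply, lam_lam]

lemma emb_injective : Function.Injective (emb (B := B)) := by
  intro a b h
  have := congrArg SemidirectProduct.left h
  exact Multiplicative.ofAdd.injective this

end SBAux

/-- `H_B = {(b, λ_b) : b ∈ B}` is a regular subgroup of `Hol(B,+)`,
isomorphic to the multiplicative group `(B,·)`. -/
theorem statement0 (B : Type*) [SkewBrace B] :
    ∃ H : Subgroup (AddHolomorph B),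
      (∀ p : AddHolomorph B, p ∈ H ↔ ∃ b : B,
          p.left = Multiplicative.ofAdd b ∧
          ∀ c : B, p.right (Multiplicative.ofAdd c) = Multiplicative.ofAdd (lam b c)) ∧
      (∀ g : B, ∃! φ : MulAut (Multiplicative B),
          (⟨Multiplicative.ofAdd g, φ⟩ : AddHolomorph B) ∈ H) ∧
      Nonempty (B ≃* H) := by
  refine ⟨(SBAux.emb (B := B)).range, ?_, ?_, ?_⟩
  · intro p
    constructor
    · rintro ⟨b, rfl⟩
      exact ⟨b, rfl, fun c => rfl⟩
    · rintro ⟨b, h1, h2⟩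
      refine ⟨b, ?_⟩
      cases p with
      | mk l r =>
        refine SemidirectProduct.ext ?_ ?_
        · exact h1.symm
        · ext x
          have := h2 x.toAdd
          simp only [ofAdd_toAdd] at this
          exact (this.symm)
  · intro g
    refine ⟨SBAux.Lam g, ⟨g, rfl⟩, ?_⟩
    intro φ hφ
    obtain ⟨b, hb⟩ := hφ
    have hl := congrArg SemidirectProduct.left hb
    have hb2 : b = g := Multiplicative.ofAdd.injective hl
    have hr := congrArg SemidirectProduct.right hb
    rw [hb2] at hr
    exact hr.symm
  · exact ⟨MonoidHom.ofInjective SBAux.emb_injective⟩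
end

section
/- Every simple soluble skew left brace is abelian and isomorphic (as a brace) to a cyclic group of prime order with trivial brace structure. -/
open SkewBraceDefs

section Aux
variable {B : Type*} [SkewBrace B]

lemma SB.zero_eq_one : (0 : B) = 1 := by
  have h := SkewBrace.mul_add_dist (1 : B) 0 0
  rw [add_zero, one_mul] at h
  have h1 : (0 : B) = -1 := by simpa using h
  simpa using congrArg Neg.neg h1

lemma SB.abelian_of_series (hnz : ∃ x : B, x ≠ 0)
    (hsimple : ∀ I : Set B, IsIdeal I → I = {(0 : B)} ∨ I = Set.univ) :
    ∀ (n : ℕ) (I : ℕ → Set B), IsAbelianSeries I n →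
      ∀ a b : B, a * b = a + b ∧ a + b = b + a := by
  intro n
  induction n with
  | zero =>
    rintro I ⟨h0, hn, _⟩ a b
    obtain ⟨x, hx⟩ := hnz
    exact absurd (by rw [← hn, h0]; trivial : x ∈ ({0} : Set B)) (by simpa using hx)
  | succ n ih =>
    rintro I ⟨h0, hn, hstep⟩
    obtain ⟨hsub, hz, hadd, hneg, hmul, hinv, hconjA, hconjM, hlam⟩ :=
      (hstep 0 (Nat.succ_pos n)).1
    have huniv : ∀ x : B, x ∈ I 0 := by rw [h0]; intro x; trivial
    have hId : IsIdeal (I 1) := by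
      refine ⟨⟨⟨⟨⟨I 1, fun {a b} ha hb => hadd _ ha _ hb⟩, hz⟩,
          fun {a} ha => hneg _ ha⟩, rfl, ⟨fun {x} hx g => ?_⟩⟩,
        ⟨⟨⟨⟨I 1, fun {a b} ha hb => hmul _ ha _ hb⟩,
          by rw [← SB.zero_eq_one]; exact hz⟩,
          fun {a} ha => hinv _ ha⟩, rfl, ⟨fun {x} hx g => ?_⟩⟩,
        fun b x hx => hlam b (huniv b) x hx⟩
      · have := hconjA g (huniv g) x hx
        simpa [sub_eq_add_neg] using this
      · exact hconjM g (huniv g) x hx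
    rcases hsimple _ hId with h1 | h1
    · intro a b
      obtain ⟨hc1, hc2⟩ := (hstep 0 (Nat.succ_pos n)).2 a (huniv a) b (huniv b)
      rw [h1, Set.mem_singleton_iff, neg_add_eq_zero] at hc1 hc2
      exact ⟨hc2.symm, hc1.symm⟩
    · exact ih (fun i => I (i + 1))
        ⟨h1, hn, fun i hi => hstep (i + 1) (Nat.succ_lt_succ hi)⟩

end Aux

/-- A simple soluble skew left brace is abelian, cyclic of prime order. -/
theorem statement11 (B : Type*) [SkewBrace B]
    (hnz : ∃ x : B, x ≠ 0)
    (hsimple : ∀ I : Set B, IsIdeal I → I = {(0 : B)} ∨ I = Set.univ)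
    (hsol : IsSoluble B) :
    (∀ a b : B, a * b = a + b ∧ a + b = b + a) ∧ IsAddCyclic B ∧
      ∃ p : ℕ, p.Prime ∧ Nat.card B = p := by
  obtain ⟨n, I, hI⟩ := hsol
  have hc : ∀ a b : B, a * b = a + b ∧ a + b = b + a :=
    SB.abelian_of_series hnz hsimple n I hI
  have h01 : (0 : B) = 1 := SB.zero_eq_one
  have hinv : ∀ a : B, a⁻¹ = -a := fun a =>
    inv_eq_of_mul_eq_one_right (by rw [(hc a (-a)).1, add_neg_cancel, h01])
  letI cg : AddCommGroup B := { (inferInstance : AddGroup B) with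
    add_comm := fun a b => (hc a b).2 }
  haveI hSA : IsSimpleAddGroup B := by
    obtain ⟨x, hx⟩ := hnz
    refine { toNontrivial := ⟨⟨x, 0, hx⟩⟩, eq_bot_or_eq_top_of_normal := fun H _ => ?_ }
    have hId : IsIdeal (H : Set B) := by
      refine ⟨⟨H, rfl, ⟨fun {x} hx g => ?_⟩⟩,
        ⟨⟨⟨⟨(H : Set B), fun {a b} ha hb => ?_⟩, ?_⟩, fun {a} ha => ?_⟩,
          rfl, ⟨fun {x} hx g => ?_⟩⟩, fun b x hx => ?_⟩
      · have : g + x = x + g := (hc g x).2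
        rw [this, add_neg_cancel_right]; exact hx
      · show a * b ∈ H; rw [(hc a b).1]; exact H.add_mem ha hb
      · show (1 : B) ∈ H; rw [← h01]; exact H.zero_mem
      · show a⁻¹ ∈ H; rw [hinv]; exact H.neg_mem ha
      · show g * x * g⁻¹ ∈ H
        rw [(hc g x).1, (hc (g + x) g⁻¹).1, hinv, (hc g x).2, add_neg_cancel_right]
        exact hx
      · show lam b x ∈ H
        have : lam b x = x := by
          rw [lam, (hc b x).1, neg_add_cancel_left]
        rw [this]; exact hx
    rcases hsimple _ hId with h | h
    · exact Or.inl (SetLike.ext' (by rw [h]; rfl))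
    · exact Or.inr (SetLike.ext' (by rw [h]; rfl))
  have htop : ∀ y : B, y ≠ 0 → AddSubgroup.zmultiples y = ⊤ := fun y hy =>
    (IsSimpleAddGroup.eq_bot_or_eq_top_of_normal _ inferInstance).resolve_left
      (AddSubgroup.zmultiples_ne_bot.2 hy)
  obtain ⟨x, hx⟩ := hnz
  haveI hfin : Finite B := by
    by_cases hfo : IsOfFinAddOrder x
    · have hset : (AddSubgroup.zmultiples x : Set B).Finite := hfo.finite_zmultiples
      rw [htop x hx] at hset
      have : (Set.univ : Set B).Finite := by simpa using hset
      exact Set.finite_univ_iff.mp this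
    · exfalso
      have h2 : x + x ≠ 0 := fun h => hfo
        (isOfFinAddOrder_iff_nsmul_eq_zero.2 ⟨2, two_pos, by rw [two_nsmul]; exact h⟩)
      have hx' : x ∈ AddSubgroup.zmultiples (x + x) := by
        rw [htop _ h2]; trivial
      obtain ⟨z, hz0⟩ := hx'
      have hz : z • (x + x) = x := hz0
      have hz2 : (z + z - 1) • x = 0 := by
        have h3 : z • (x + x) = (z + z) • x := by rw [smul_add, add_zsmul]
        rw [sub_zsmul, one_zsmul, ← h3, hz]; simp
      have hne : z + z - 1 ≠ 0 := by omega
      apply hfo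
      refine isOfFinAddOrder_iff_nsmul_eq_zero.2
        ⟨(z + z - 1).natAbs, Int.natAbs_pos.2 hne, ?_⟩
      rcases Int.natAbs_eq (z + z - 1) with h | h
      · rw [← natCast_zsmul, ← h]; exact hz2
      · rw [← natCast_zsmul]
        have h4 : (-((z + z - 1).natAbs : ℤ)) • x = 0 := by rw [← h]; exact hz2
        rw [neg_zsmul, neg_eq_zero] at h4; exact h4
  exact ⟨hc, inferInstance, Nat.card B, IsSimpleAddGroup.prime_card, rfl⟩
end

section
/- Let B be a finite skew left brace and S a maximal subbrace of B. Then ζ(B) ⊆ S or ∂(B) = [B,B] ⊆ S. Consequently ζ(B) ∩ ∂(B) is contained in the Frattini subbrace Φ(B). -/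
open SkewBraceDefs

section Aux
variable {B : Type*} [SkewBrace B]

lemma sb_mul_zero (a : B) : a * 0 = a := by
  have h := SkewBrace.mul_add_dist a 0 0
  rw [add_zero] at h
  have h2 : a * 0 - a + a * 0 = 0 + a * 0 := by rw [zero_add, ← h]
  have h3 : a * 0 - a = 0 := add_right_cancel h2
  rwa [sub_eq_zero] at h3

lemma sb_one_eq_zero : (1 : B) = 0 := by
  have h := sb_mul_zero (1 : B)
  rw [one_mul] at h
  exact h.symm

lemma zeta_addc {z : B} (hz : z ∈ zeta B) (b : B) : z + b = b + z := (hz b).1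
lemma zeta_mul {z : B} (hz : z ∈ zeta B) (b : B) : z * b = z + b := (hz b).2.1
lemma zeta_mulr {z : B} (hz : z ∈ zeta B) (b : B) : b * z = b + z := by
  rw [(hz b).2.2, zeta_addc hz]

lemma zeta_zero : (0 : B) ∈ zeta B := by
  intro b
  refine ⟨by rw [zero_add, add_zero], ?_, ?_⟩
  · rw [← sb_one_eq_zero, one_mul, sb_one_eq_zero, zero_add]
  · rw [sb_mul_zero, zero_add]

lemma zeta_inv_eq_neg {z : B} (hz : z ∈ zeta B) : z⁻¹ = -z := by
  have : z * (-z) = 1 := by rw [zeta_mul hz, add_neg_cancel, sb_one_eq_zero]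
  exact (inv_eq_of_mul_eq_one_right this)

lemma zeta_neg {z : B} (hz : z ∈ zeta B) : -z ∈ zeta B := by
  intro b
  have hc : AddCommute z b := zeta_addc hz b
  refine ⟨hc.neg_left.eq, ?_, ?_⟩
  · rw [← zeta_inv_eq_neg hz]
    have : z * (-z + b) = b := by rw [zeta_mul hz, add_neg_cancel_left]
    calc z⁻¹ * b = z⁻¹ * (z * (-z + b)) := by rw [this]
    _ = -z + b := by rw [inv_mul_cancel_left]
    _ = z⁻¹ + b := by rw [zeta_inv_eq_neg hz]
  · rw [← zeta_inv_eq_neg hz]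
    have h1 : (b * z⁻¹) * z = b := by rw [mul_assoc, inv_mul_cancel, mul_one]
    have h2 : (b * z⁻¹) * z = b * z⁻¹ + z := zeta_mulr hz _
    have : b * z⁻¹ + z = b := by rw [← h2, h1]
    have := congrArg (fun t => t + (-z)) this
    simp only [add_neg_cancel_right] at this
    rw [this, zeta_inv_eq_neg hz]
    exact hc.neg_left.eq.symm

lemma zeta_add {z w : B} (hz : z ∈ zeta B) (hw : w ∈ zeta B) : z + w ∈ zeta B := by
  intro b
  have hcz : AddCommute z b := zeta_addc hz b
  have hcw : AddCommute w b := zeta_addc hw b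
  have hc : AddCommute (z + w) b := hcz.add_left hcw
  refine ⟨hc.eq, ?_, ?_⟩
  · calc (z + w) * b = (z * w) * b := by rw [zeta_mul hz w]
    _ = z * (w * b) := mul_assoc _ _ _
    _ = z + (w + b) := by rw [zeta_mul hw, zeta_mul hz]
    _ = (z + w) + b := (add_assoc _ _ _).symm
  · calc b * (z + w) = b * z - b + b * w := SkewBrace.mul_add_dist b z w
    _ = (z + b) - b + (b + w) := by rw [zeta_mulr hz, zeta_mulr hw, ← zeta_addc hz]
    _ = z + (b + w) := by rw [add_sub_cancel_right]
    _ = z + (w + b) := by rw [zeta_addc hw]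
    _ = (z + w) + b := (add_assoc _ _ _).symm


lemma zeta_mcomm {w : B} (hw : w ∈ zeta B) (b : B) : Commute w b := by
  have h : w * b = b * w := by rw [zeta_mul hw, (hw b).2.2]
  exact h

lemma zeta_msplit {w : B} (hw : w ∈ zeta B) (s : B) : s + w = s * w :=
  (zeta_mulr hw s).symm

lemma add_decomp {w₁ w₂ : B} (hw₁ : w₁ ∈ zeta B) (s₁ s₂ : B) :
    (s₁ + w₁) + (s₂ + w₂) = (s₁ + s₂) + (w₁ + w₂) := by
  have hc : AddCommute w₁ s₂ := zeta_addc hw₁ s₂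
  rw [add_assoc s₁ w₁, ← add_assoc w₁ s₂ w₂, hc.eq, add_assoc s₂ w₁ w₂, ← add_assoc]

lemma neg_decomp {w : B} (hw : w ∈ zeta B) (s : B) : -(s + w) = -s + -w := by
  have h0 : AddCommute w (-s) := zeta_addc hw (-s)
  rw [neg_add_rev, h0.neg_left.eq]

lemma mul_decomp {w₁ w₂ : B} (hw₁ : w₁ ∈ zeta B) (s₁ s₂ : B) :
    (s₁ * w₁) * (s₂ * w₂) = (s₁ * s₂) * (w₁ * w₂) :=
  (zeta_mcomm hw₁ s₂).mul_mul_mul_comm s₁ w₂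

lemma inv_decomp {w : B} (hw : w ∈ zeta B) (s : B) : (s * w)⁻¹ = s⁻¹ * w⁻¹ := by
  rw [mul_inv_rev, (zeta_mcomm hw s).inv_inv.eq]

lemma zeta_conj_add {w : B} (hw : w ∈ zeta B) (s b : B) :
    (s + w) + b + -(s + w) = s + b + -s := by
  rw [neg_add_rev, add_assoc s w b, zeta_addc hw b, ← add_assoc s b w,
    add_assoc (s + b) w, add_neg_cancel_left]

lemma zeta_conj_mul {w : B} (hw : w ∈ zeta B) (s b : B) :
    (s * w) * b * (s * w)⁻¹ = s * b * s⁻¹ := by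
  rw [mul_inv_rev, mul_assoc s w b, (zeta_mcomm hw b).eq, ← mul_assoc s b w,
    mul_assoc (s * b) w, mul_inv_cancel_left]

lemma lam_decomp {w : B} (hw : w ∈ zeta B) (s x : B) :
    lam (s * w) x = lam s x := by
  unfold lam
  rw [mul_assoc, zeta_mul hw x, SkewBrace.mul_add_dist s w x, ← zeta_msplit hw s,
    neg_decomp hw s, sub_eq_add_neg]
  rw [← zeta_addc hw s, add_assoc w s (-s), add_neg_cancel, add_zero,
    add_assoc (-s) (-w), neg_add_cancel_left]

lemma comm_add_decomp {w₁ w₂ : B} (hw₁ : w₁ ∈ zeta B) (hw₂ : w₂ ∈ zeta B) (s₁ s₂ : B) :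
    (s₁ + w₁) + (s₂ + w₂) - (s₁ + w₁) - (s₂ + w₂) = s₁ + s₂ - s₁ - s₂ := by
  rw [sub_eq_add_neg _ (s₁ + w₁), sub_eq_add_neg _ (s₂ + w₂), zeta_conj_add hw₁,
    neg_decomp hw₂ s₂]
  -- s₁ + (s₂ + w₂) + -s₁ + (-s₂ + -w₂) = s₁ + s₂ - s₁ - s₂
  rw [← add_assoc s₁ s₂ w₂, add_assoc (s₁ + s₂) w₂ (-s₁), zeta_addc hw₂ (-s₁),
    ← add_assoc (s₁ + s₂) (-s₁) w₂, ← zeta_addc (zeta_neg hw₂) (-s₂),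
    add_assoc (s₁ + s₂ + -s₁) w₂, add_neg_cancel_left, sub_eq_add_neg, sub_eq_add_neg]

lemma comm_mul_decomp {w₁ w₂ : B} (hw₁ : w₁ ∈ zeta B) (hw₂ : w₂ ∈ zeta B) (s₁ s₂ : B) :
    (s₁ * w₁) * (s₂ * w₂) * (s₁ * w₁)⁻¹ * (s₂ * w₂)⁻¹ = s₁ * s₂ * s₁⁻¹ * s₂⁻¹ := by
  rw [zeta_conj_mul hw₁, inv_decomp hw₂]
  rw [← mul_assoc s₁ s₂ w₂, mul_assoc (s₁ * s₂) w₂ s₁⁻¹, (zeta_mcomm hw₂ s₁⁻¹).eq,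
    ← mul_assoc (s₁ * s₂) s₁⁻¹ w₂, ← ((zeta_mcomm hw₂ s₂⁻¹).inv_left).eq,
    mul_assoc (s₁ * s₂ * s₁⁻¹) w₂, mul_inv_cancel_left]

lemma mulsub_decomp {w₁ w₂ : B} (hw₁ : w₁ ∈ zeta B) (hw₂ : w₂ ∈ zeta B) (s₁ s₂ : B) :
    (s₁ + w₁) * (s₂ + w₂) - ((s₁ + w₁) + (s₂ + w₂)) = s₁ * s₂ - (s₁ + s₂) := by
  rw [zeta_msplit hw₁ s₁, zeta_msplit hw₂ s₂, mul_decomp hw₁, zeta_mul hw₁ w₂,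
    ← zeta_msplit (zeta_add hw₁ hw₂) (s₁ * s₂), ← zeta_msplit hw₁ s₁, ← zeta_msplit hw₂ s₂,
    add_decomp hw₁, sub_eq_add_neg, neg_add_rev (s₁ + s₂) (w₁ + w₂),
    add_assoc (s₁ * s₂) (w₁ + w₂), add_neg_cancel_left, ← sub_eq_add_neg]

end Aux


/-- For every maximal subbrace `S` of a finite skew brace `B`: `ζ(B) ⊆ S` or
`∂(B) = [B,B] ⊆ S`. Consequently `ζ(B) ∩ ∂(B) ⊆ Φ(B)`. -/
theorem statement14 (B : Type*) [SkewBrace B] [Finite B] :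
    (∀ S : Set B, IsMaximalSubbrace S →
        zeta B ⊆ S ∨ commIdeal (Set.univ : Set B) Set.univ ⊆ S) ∧
    zeta B ∩ commIdeal (Set.univ : Set B) Set.univ ⊆ Frattini B := by

  have main : ∀ S : Set B, IsMaximalSubbrace S →
      zeta B ⊆ S ∨ commIdeal (Set.univ : Set B) Set.univ ⊆ S := by
    intro S hS
    by_cases hzs : zeta B ⊆ S
    · exact Or.inl hzs
    · right
      obtain ⟨⟨⟨A, hA⟩, ⟨M, hM⟩⟩, hSne, hmax⟩ := hS
      obtain ⟨z, hzz, hzS⟩ := Set.not_subset.mp hzs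
      subst hA
      have hMS : ∀ x : B, x ∈ (A : Set B) ↔ x ∈ M := fun x => by
        rw [← hM]; exact SetLike.mem_coe
      have S0 : (0 : B) ∈ (A : Set B) := A.zero_mem
      have Sadd : ∀ {x y : B}, x ∈ (A : Set B) → y ∈ (A : Set B) → x + y ∈ (A : Set B) :=
        fun hx hy => A.add_mem hx hy
      have Sneg : ∀ {x : B}, x ∈ (A : Set B) → -x ∈ (A : Set B) := fun hx => A.neg_mem hx
      have Smul : ∀ {x y : B}, x ∈ (A : Set B) → y ∈ (A : Set B) → x * y ∈ (A : Set B) :=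
        fun {x y} hx hy => (hMS _).mpr (M.mul_mem ((hMS x).mp hx) ((hMS y).mp hy))
      have Sinv : ∀ {x : B}, x ∈ (A : Set B) → x⁻¹ ∈ (A : Set B) :=
        fun {x} hx => (hMS _).mpr (M.inv_mem ((hMS x).mp hx))
      set T : Set B := {x : B | ∃ s ∈ (A : Set B), ∃ w ∈ zeta B, x = s + w} with hTdef
      have hST : (A : Set B) ⊆ T := fun s hs => ⟨s, hs, 0, zeta_zero, (add_zero s).symm⟩
      have hzT : z ∈ T := ⟨0, S0, z, hzz, (zero_add z).symm⟩
      have hTsub : IsSubbrace T := by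
        constructor
        · refine ⟨{ carrier := T, add_mem' := ?_, zero_mem' := ?_, neg_mem' := ?_ }, rfl⟩
          · rintro a b ⟨s₁, hs₁, w₁, hw₁, rfl⟩ ⟨s₂, hs₂, w₂, hw₂, rfl⟩
            exact ⟨s₁ + s₂, Sadd hs₁ hs₂, w₁ + w₂, zeta_add hw₁ hw₂, add_decomp hw₁ s₁ s₂⟩
          · exact ⟨0, S0, 0, zeta_zero, (add_zero 0).symm⟩
          · rintro x ⟨s, hs, w, hw, rfl⟩
            exact ⟨-s, Sneg hs, -w, zeta_neg hw, neg_decomp hw s⟩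
        · refine ⟨{ carrier := T, mul_mem' := ?_, one_mem' := ?_, inv_mem' := ?_ }, rfl⟩
          · rintro a b ⟨s₁, hs₁, w₁, hw₁, rfl⟩ ⟨s₂, hs₂, w₂, hw₂, rfl⟩
            refine ⟨s₁ * s₂, Smul hs₁ hs₂, w₁ + w₂, zeta_add hw₁ hw₂, ?_⟩
            rw [zeta_msplit hw₁ s₁, zeta_msplit hw₂ s₂, mul_decomp hw₁, zeta_mul hw₁ w₂,
              ← zeta_msplit (zeta_add hw₁ hw₂) (s₁ * s₂)]
          · exact ⟨0, S0, 0, zeta_zero, by rw [sb_one_eq_zero, add_zero]⟩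
          · rintro x ⟨s, hs, w, hw, rfl⟩
            refine ⟨s⁻¹, Sinv hs, -w, zeta_neg hw, ?_⟩
            rw [zeta_msplit hw s, inv_decomp hw s, zeta_inv_eq_neg hw,
              ← zeta_msplit (zeta_neg hw) s⁻¹]
      rcases hmax T hTsub hST with hTS | hTuniv
      · exact absurd (hTS ▸ hzT) hzS
      · have hdec : ∀ b : B, ∃ s ∈ (A : Set B), ∃ w ∈ zeta B, b = s + w := fun b => by
          have hb : b ∈ T := hTuniv.symm ▸ Set.mem_univ b
          exact hb
        apply Set.sInter_subset_of_mem
        refine ⟨⟨⟨A, rfl, ⟨?_⟩⟩, ⟨M, hM, ⟨?_⟩⟩, ?_⟩, ?_⟩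
        · intro n hn g
          obtain ⟨s, hs, w, hw, rfl⟩ := hdec g
          rw [zeta_conj_add hw s n]
          exact Sadd (Sadd hs hn) (Sneg hs)
        · intro n hn g
          obtain ⟨s, hs, w, hw, rfl⟩ := hdec g
          rw [zeta_msplit hw s, zeta_conj_mul hw s n]
          exact M.mul_mem (M.mul_mem ((hMS s).mp hs) hn) (M.inv_mem ((hMS s).mp hs))
        · intro b x hx
          obtain ⟨s, hs, w, hw, rfl⟩ := hdec b
          rw [zeta_msplit hw s, lam_decomp hw s x]
          show -s + s * x ∈ (A : Set B)
          exact Sadd (Sneg hs) (Smul hs hx)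
        · intro i _ j _
          obtain ⟨s₁, hs₁, w₁, hw₁, rfl⟩ := hdec i
          obtain ⟨s₂, hs₂, w₂, hw₂, rfl⟩ := hdec j
          refine ⟨?_, ?_, ?_⟩
          · rw [comm_add_decomp hw₁ hw₂]
            exact A.sub_mem (A.sub_mem (Sadd hs₁ hs₂) hs₁) hs₂
          · rw [zeta_msplit hw₁ s₁, zeta_msplit hw₂ s₂, comm_mul_decomp hw₁ hw₂]
            exact Smul (Smul (Smul hs₁ hs₂) (Sinv hs₁)) (Sinv hs₂)
          · rw [mulsub_decomp hw₁ hw₂]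
            exact A.sub_mem (Smul hs₁ hs₂) (Sadd hs₁ hs₂)
  refine ⟨main, ?_⟩
  rintro x ⟨hxz, hxc⟩
  exact Set.mem_sInter.mpr fun S hS => (main S hS).elim (fun h => h hxz) (fun h => h hxc)
end

section
/- Let I/J be an abelian chief factor of a skew left brace B. Then either I/J ⊆ Φ(B/J) (Frattini chief factor) or I/J has a complement in B/J (there is a subbrace T of B/J with (I/J)·T = I/J + T = B/J and (I/J) ∩ T = 0). If moreover B is finite, every complement of I/J is a maximal subbrace of B/J. -/
open SkewBraceDefs

namespace SkewBraceDefs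

variable {B : Type*} [SkewBrace B]

lemma mul_zero' (a : B) : a * 0 = a := by
  have h := SkewBrace.mul_add_dist a 0 0
  rw [add_zero, sub_eq_add_neg, add_assoc] at h
  have h2 : -a + a * 0 = 0 := (left_eq_add.mp h)
  exact neg_add_eq_zero.mp h2 ▸ rfl

lemma zero_eq_one : (0 : B) = 1 := by
  have := mul_zero' (1 : B)
  rwa [one_mul] at this

lemma mul_eq_add_lam (a b : B) : a * b = a + lam a b := by
  rw [lam, add_neg_cancel_left]

lemma lam_add (a b c : B) : lam a (b + c) = lam a b + lam a c := by
  simp [lam, SkewBrace.mul_add_dist, sub_eq_add_neg, add_assoc]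

lemma mul_neg' (a b : B) : a * (-b) = a + -(a * b) + a := by
  have h := SkewBrace.mul_add_dist a b (-b)
  rw [add_neg_cancel, mul_zero', sub_eq_add_neg] at h
  -- h : a = a*b + -a + a*(-b)
  have : a * (-b) = -(a * b + -a) + a :=
    eq_neg_add_iff_add_eq.mpr h.symm
  rw [this, neg_add_rev, neg_neg]

lemma lam_mul (a b c : B) : lam (a * b) c = lam a (lam b c) := by
  have : lam a (lam b c) = lam a (-b) + lam a (b * c) := by
    rw [lam]; exact lam_add a (-b) (b*c)
  rw [this, lam, lam, lam, mul_neg', mul_assoc]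
  simp [add_assoc]

lemma lam_one (c : B) : lam 1 c = c := by
  rw [lam, one_mul, ← zero_eq_one, neg_zero, zero_add]

namespace SB
variable {S I J W : Set B}

lemma zero_mem (h : IsSubbrace S) : (0 : B) ∈ S := by
  obtain ⟨⟨A, rfl⟩, -⟩ := h; exact A.zero_mem

lemma one_mem (h : IsSubbrace S) : (1 : B) ∈ S := by
  rw [← zero_eq_one]; exact zero_mem h

lemma add_mem (h : IsSubbrace S) {x y : B} (hx : x ∈ S) (hy : y ∈ S) : x + y ∈ S := by
  obtain ⟨⟨A, rfl⟩, -⟩ := h; exact A.add_mem hx hy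

lemma neg_mem (h : IsSubbrace S) {x : B} (hx : x ∈ S) : -x ∈ S := by
  obtain ⟨⟨A, rfl⟩, -⟩ := h; exact A.neg_mem hx

lemma mul_mem (h : IsSubbrace S) {x y : B} (hx : x ∈ S) (hy : y ∈ S) : x * y ∈ S := by
  obtain ⟨-, M, rfl⟩ := h; exact M.mul_mem hx hy

lemma inv_mem (h : IsSubbrace S) {x : B} (hx : x ∈ S) : x⁻¹ ∈ S := by
  obtain ⟨-, M, rfl⟩ := h; exact M.inv_mem hx

lemma ideal_subbrace (h : IsIdeal I) : IsSubbrace I :=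
  ⟨⟨h.1.choose, h.1.choose_spec.1⟩, ⟨h.2.1.choose, h.2.1.choose_spec.1⟩⟩

lemma addconj (h : IsIdeal I) (g : B) {x : B} (hx : x ∈ I) : g + x + -g ∈ I := by
  obtain ⟨⟨A, hA, hN⟩, -⟩ := h; subst hA; exact hN.conj_mem x hx g

lemma mulconj (h : IsIdeal I) (g : B) {x : B} (hx : x ∈ I) : g * x * g⁻¹ ∈ I := by
  obtain ⟨-, ⟨M, hM, hN⟩, -⟩ := h; subst hM; exact hN.conj_mem x hx g

lemma lam_mem (h : IsIdeal I) (g : B) {x : B} (hx : x ∈ I) : lam g x ∈ I := h.2.2 g x hx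

/-- In the abelian factor, `lam x y = y + j` with `j ∈ J`. -/
lemma lam_shift
    (habJ : ∀ x ∈ I, ∀ y ∈ I, -(y + x) + (x + y) ∈ J ∧ -(x + y) + x * y ∈ J)
    {x y : B} (hx : x ∈ I) (hy : y ∈ I) :
    ∃ j ∈ J, lam x y = y + j := by
  refine ⟨-(x + y) + x * y, (habJ x hx y hy).2, ?_⟩
  rw [lam]
  rw [show y + (-(x + y) + x * y) = (y + -(x+y)) + x*y by rw [add_assoc],
    neg_add_rev, ← add_assoc, add_neg_cancel, zero_add]

/-- In the abelian factor, `x + y + -x = y + j'` with `j' ∈ J` provided `J` is normal. -/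
lemma addconj_shift (hJ : IsIdeal J)
    (habJ : ∀ x ∈ I, ∀ y ∈ I, -(y + x) + (x + y) ∈ J ∧ -(x + y) + x * y ∈ J)
    {x y : B} (hx : x ∈ I) (hy : y ∈ I) :
    ∃ j ∈ J, x + y + -x = y + j := by
  have hc := (habJ x hx y hy).1
  refine ⟨x + (-(y + x) + (x + y)) + -x, addconj hJ x hc, ?_⟩
  rw [show y + (x + (-(y + x) + (x + y)) + -x) = (y + x + (-(y+x) + (x+y))) + -x by
    simp [add_assoc], add_neg_cancel_left]

/-- Multiplicative commutators of `I` lie in `J`. -/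
lemma comm_mem (hI : IsIdeal I) (hJ : IsIdeal J)
    (habJ : ∀ x ∈ I, ∀ y ∈ I, -(y + x) + (x + y) ∈ J ∧ -(x + y) + x * y ∈ J)
    {a b : B} (ha : a ∈ I) (hb : b ∈ I) :
    a⁻¹ * b * a * b⁻¹ ∈ J := by
  have key : ∀ x ∈ I, ∀ y ∈ I, x⁻¹ * y⁻¹ * x * y ∈ J := by
    intro x hx y hy
    have h1 : -(y * x) + (y + x) ∈ J := by
      have h0 := neg_mem (ideal_subbrace hJ) (habJ y hy x hx).2
      rwa [neg_add_rev, neg_neg] at h0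
    have h2 := (habJ x hx y hy).1
    have h3 := (habJ x hx y hy).2
    have hd : -(y * x) + x * y ∈ J := by
      have hde : -(y * x) + x * y =
          -(y * x) + (y + x) + (-(y + x) + (x + y) + (-(x + y) + x * y)) := by
        simp [add_assoc]
      rw [hde]
      exact add_mem (ideal_subbrace hJ) h1 (add_mem (ideal_subbrace hJ) h2 h3)
    have hit : (y * x)⁻¹ * (x * y) = lam (y * x)⁻¹ (-(y * x) + x * y) := by
      conv_lhs => rw [show x * y = y * x + (-(y * x) + x * y) from
        (add_neg_cancel_left _ _).symm]
      rw [SkewBrace.mul_add_dist, inv_mul_cancel, sub_eq_add_neg, ← zero_eq_one,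
        zero_add, lam]
    have hm := lam_mem hJ (y * x)⁻¹ hd
    rwa [← hit, mul_inv_rev, ← mul_assoc] at hm
  have := key a ha b⁻¹ (inv_mem (ideal_subbrace hI) hb)
  rwa [inv_inv] at this

lemma inter_ideal (hI : IsIdeal I) (hJ : IsIdeal J) (hW : IsSubbrace W)
    (hJI : J ⊆ I) (hJW : J ⊆ W)
    (habJ : ∀ x ∈ I, ∀ y ∈ I, -(y + x) + (x + y) ∈ J ∧ -(x + y) + x * y ∈ J)
    (hcovm : ∀ b : B, ∃ x ∈ I, ∃ t ∈ W, b = x * t)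
    (hcova : ∀ b : B, ∃ x ∈ I, ∃ t ∈ W, b = x + t) :
    IsIdeal (I ∩ W) := by
  have key_add : ∀ g : B, ∀ n ∈ I ∩ W, g + n + -g ∈ I ∩ W := by
    intro g n hn
    obtain ⟨x, hx, t, ht, rfl⟩ := hcova g
    have h1 : t + n + -t ∈ I ∩ W :=
      ⟨addconj hI t hn.1, add_mem hW (add_mem hW ht hn.2) (neg_mem hW ht)⟩
    obtain ⟨j, hj, hje⟩ := addconj_shift hJ habJ hx h1.1
    have heq : x + t + n + -(x + t) = t + n + -t + j := by
      rw [← hje]; simp [add_assoc, neg_add_rev]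
    rw [heq]
    exact ⟨add_mem (ideal_subbrace hI) h1.1 (hJI hj),
      add_mem hW h1.2 (hJW hj)⟩
  have key_mul : ∀ g : B, ∀ n ∈ I ∩ W, g * n * g⁻¹ ∈ I ∩ W := by
    intro g n hn
    obtain ⟨x, hx, t, ht, rfl⟩ := hcovm g
    have h1 : t * n * t⁻¹ ∈ I ∩ W :=
      ⟨mulconj hI t hn.1, mul_mem hW (mul_mem hW ht hn.2) (inv_mem hW ht)⟩
    have hc : (t * n * t⁻¹)⁻¹ * x * (t * n * t⁻¹) * x⁻¹ ∈ J :=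
      comm_mem hI hJ habJ h1.1 hx
    have heq : x * t * n * (x * t)⁻¹ =
        (t * n * t⁻¹) * ((t * n * t⁻¹)⁻¹ * x * (t * n * t⁻¹) * x⁻¹) := by group
    rw [heq]
    exact ⟨mul_mem (ideal_subbrace hI) h1.1 (hJI hc),
      mul_mem hW h1.2 (hJW hc)⟩
  have key_lam : ∀ g : B, ∀ n ∈ I ∩ W, lam g n ∈ I ∩ W := by
    intro g n hn
    obtain ⟨x, hx, t, ht, rfl⟩ := hcovm g
    have h1 : lam t n ∈ I ∩ W := ⟨lam_mem hI t hn.1, by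
      rw [lam]; exact add_mem hW (neg_mem hW ht) (mul_mem hW ht hn.2)⟩
    obtain ⟨j, hj, hje⟩ := lam_shift habJ hx h1.1
    rw [lam_mul, hje]
    exact ⟨add_mem (ideal_subbrace hI) h1.1 (hJI hj), add_mem hW h1.2 (hJW hj)⟩
  have hI' := hI
  have hW' := hW
  obtain ⟨⟨AI, hAI, -⟩, ⟨MI, hMI, -⟩, -⟩ := hI'
  obtain ⟨⟨AW, hAW⟩, ⟨MW, hMW⟩⟩ := hW'
  have hco1 : (↑(AI ⊓ AW) : Set B) = I ∩ W := by
    rw [AddSubgroup.coe_inf, hAI, hAW]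
  have hco2 : (↑(MI ⊓ MW) : Set B) = I ∩ W := by
    rw [Subgroup.coe_inf, hMI, hMW]
  refine ⟨⟨AI ⊓ AW, hco1, ⟨fun n hn g => ?_⟩⟩, ⟨MI ⊓ MW, hco2, ⟨fun n hn g => ?_⟩⟩,
    fun b x hx => key_lam b x hx⟩
  · have hn' : n ∈ I ∩ W := by rw [← hco1]; exact hn
    have h2 := key_add g n hn'
    rw [← hco1] at h2
    exact h2
  · have hn' : n ∈ I ∩ W := by rw [← hco2]; exact hn
    have h2 := key_mul g n hn'
    rw [← hco2] at h2
    exact h2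

end SB

/-- The set `I · S`. -/
def mulSet (I S : Set B) : Set B := {b : B | ∃ x ∈ I, ∃ t ∈ S, b = x * t}

/-- The set `I + S`. -/
def addSet (I S : Set B) : Set B := {b : B | ∃ x ∈ I, ∃ t ∈ S, b = x + t}

namespace SB
variable {S I J W : Set B}

lemma prodset_eq (hI : IsIdeal I) (hS : IsSubbrace S) :
    mulSet I S = addSet I S := by
  ext b
  constructor
  · rintro ⟨x, hx, t, ht, rfl⟩
    have h1 : t⁻¹ * x * t ∈ I := by
      have := mulconj hI t⁻¹ hx; rwa [inv_inv] at this
    have h2 : lam t (t⁻¹ * x * t) ∈ I := lam_mem hI t h1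
    refine ⟨t + lam t (t⁻¹ * x * t) + -t, addconj hI t h2, t, ht, ?_⟩
    rw [add_assoc, add_assoc, neg_add_cancel, add_zero, ← mul_eq_add_lam]
    group
  · rintro ⟨x, hx, t, ht, rfl⟩
    have h1 : -t + x + t ∈ I := by
      have := addconj hI (-t) hx; rwa [neg_neg] at this
    have h2 : lam t⁻¹ (-t + x + t) ∈ I := lam_mem hI t⁻¹ h1
    refine ⟨t * lam t⁻¹ (-t + x + t) * t⁻¹, mulconj hI t h2, t, ht, ?_⟩
    rw [mul_assoc, inv_mul_cancel, mul_one, mul_eq_add_lam, ← lam_mul,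
      mul_inv_cancel, lam_one, ← add_assoc, add_neg_cancel_left]

/-- `I + S` as an additive subgroup. -/
def prodAddSubgroup (hI : IsIdeal I) (hS : IsSubbrace S) : AddSubgroup B where
  carrier := addSet I S
  zero_mem' := ⟨0, zero_mem (ideal_subbrace hI), 0, zero_mem hS, (add_zero 0).symm⟩
  add_mem' := by
    rintro a b ⟨x, hx, t, ht, rfl⟩ ⟨x', hx', t', ht', rfl⟩
    refine ⟨x + (t + x' + -t), add_mem (ideal_subbrace hI) hx (addconj hI t hx'),
      t + t', add_mem hS ht ht', ?_⟩
    simp [add_assoc]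
  neg_mem' := by
    rintro a ⟨x, hx, t, ht, rfl⟩
    refine ⟨-t + -x + t, ?_, -t, neg_mem hS ht, ?_⟩
    · have := addconj hI (-t) (neg_mem (ideal_subbrace hI) hx)
      rwa [neg_neg] at this
    · simp [add_assoc, neg_add_rev]

/-- `I · S` as a multiplicative subgroup. -/
def prodSubgroup (hI : IsIdeal I) (hS : IsSubbrace S) : Subgroup B where
  carrier := mulSet I S
  one_mem' := ⟨1, one_mem (ideal_subbrace hI), 1, one_mem hS, (one_mul 1).symm⟩
  mul_mem' := by
    rintro a b ⟨x, hx, t, ht, rfl⟩ ⟨x', hx', t', ht', rfl⟩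
    exact ⟨x * (t * x' * t⁻¹), mul_mem (ideal_subbrace hI) hx (mulconj hI t hx'),
      t * t', mul_mem hS ht ht', by group⟩
  inv_mem' := by
    rintro a ⟨x, hx, t, ht, rfl⟩
    refine ⟨t⁻¹ * x⁻¹ * t, ?_, t⁻¹, inv_mem hS ht, by group⟩
    have := mulconj hI t⁻¹ (inv_mem (ideal_subbrace hI) hx)
    rwa [inv_inv] at this

lemma prodset_subbrace (hI : IsIdeal I) (hS : IsSubbrace S) :
    IsSubbrace (mulSet I S) :=
  ⟨⟨prodAddSubgroup hI hS, (prodset_eq hI hS).symm⟩, ⟨prodSubgroup hI hS, rfl⟩⟩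

end SB
end SkewBraceDefs


/-- An abelian chief factor `I/J` of a skew brace `B` is either a Frattini chief
factor (`I/J ⊆ Φ(B/J)`) or a complemented chief factor; if `B` is finite, every
complement of `I/J` is a maximal subbrace of `B/J`. (Subbraces of `B/J` correspond
to subbraces of `B` containing `J`.) -/
theorem statement17 (B : Type*) [SkewBrace B] (I J : Set B)
    (hI : IsIdeal I) (hJ : IsIdeal J) (hJI : J ⊆ I)
    (hne : J ≠ I)
    (hchief : ∀ K : Set B, IsIdeal K → J ⊆ K → K ⊆ I → K = J ∨ K = I)
    (hab : ∀ x ∈ I, ∀ y ∈ I, -(y + x) + (x + y) ∈ J ∧ -(x + y) + x * y ∈ J) :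
    ((∀ S : Set B, IsMaximalSubbrace S → J ⊆ S → I ⊆ S) ∨
      ∃ T : Set B, IsSubbrace T ∧ J ⊆ T ∧
        (∀ b : B, ∃ x ∈ I, ∃ t ∈ T, b = x * t) ∧
        (∀ b : B, ∃ x ∈ I, ∃ t ∈ T, b = x + t) ∧ I ∩ T = J) ∧
    (Finite B → ∀ T : Set B,
      (IsSubbrace T ∧ J ⊆ T ∧
        (∀ b : B, ∃ x ∈ I, ∃ t ∈ T, b = x * t) ∧
        (∀ b : B, ∃ x ∈ I, ∃ t ∈ T, b = x + t) ∧ I ∩ T = J) →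
      IsMaximalSubbrace T) := by
  constructor
  · by_cases hfr : ∀ S : Set B, IsMaximalSubbrace S → J ⊆ S → I ⊆ S
    · exact Or.inl hfr
    · right
      push_neg at hfr
      obtain ⟨S, hSmax, hJS, hIS⟩ := hfr
      have hSsub := hSmax.1
      have hPsub := SB.prodset_subbrace hI hSsub
      have hPeq := SB.prodset_eq hI hSsub
      have hSP : S ⊆ mulSet I S := fun t ht =>
        ⟨1, SB.one_mem (SB.ideal_subbrace hI), t, ht, (one_mul t).symm⟩
      have hPuniv : mulSet I S = Set.univ := by
        rcases hSmax.2.2 _ hPsub hSP with h | h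
        · exfalso
          obtain ⟨i, hiI, hiS⟩ := Set.not_subset.mp hIS
          exact hiS (h ▸ (⟨i, hiI, 1, SB.one_mem hSsub, (mul_one i).symm⟩ :
            i ∈ mulSet I S))
        · exact h
      have hcovm : ∀ b : B, ∃ x ∈ I, ∃ t ∈ S, b = x * t := fun b => by
        have hb : b ∈ mulSet I S := by rw [hPuniv]; trivial
        exact hb
      have hcova : ∀ b : B, ∃ x ∈ I, ∃ t ∈ S, b = x + t := fun b => by
        have hb : b ∈ addSet I S := by rw [← hPeq, hPuniv]; trivial
        exact hb
      have hKideal := SB.inter_ideal hI hJ hSsub hJI hJS hab hcovm hcova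
      rcases hchief _ hKideal (Set.subset_inter hJI hJS) Set.inter_subset_left with h | h
      · exact ⟨S, hSsub, hJS, hcovm, hcova, h⟩
      · refine absurd (fun x hx => ?_) hIS
        have hx' : x ∈ I ∩ S := by rw [h]; exact hx
        exact hx'.2
  · rintro - T ⟨hTsub, hJT, hcovm, hcova, hint⟩
    refine ⟨hTsub, ?_, ?_⟩
    · intro h
      rw [h, Set.inter_univ] at hint
      exact hne hint.symm
    · intro U hUsub hTU
      have hcovm' : ∀ b : B, ∃ x ∈ I, ∃ t ∈ U, b = x * t := fun b => by
        obtain ⟨x, hx, t, ht, rfl⟩ := hcovm b; exact ⟨x, hx, t, hTU ht, rfl⟩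
      have hcova' : ∀ b : B, ∃ x ∈ I, ∃ t ∈ U, b = x + t := fun b => by
        obtain ⟨x, hx, t, ht, rfl⟩ := hcova b; exact ⟨x, hx, t, hTU ht, rfl⟩
      have hKideal := SB.inter_ideal hI hJ hUsub hJI (hJT.trans hTU) hab hcovm' hcova'
      rcases hchief _ hKideal (Set.subset_inter hJI (hJT.trans hTU))
        Set.inter_subset_left with h | h
      · left
        refine Set.Subset.antisymm (fun u hu => ?_) hTU
        obtain ⟨x, hx, t, ht, hue⟩ := hcovm u
        have hxe : x = u * t⁻¹ := by rw [hue]; group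
        have hxU : x ∈ U := by
          rw [hxe]; exact SB.mul_mem hUsub hu (SB.inv_mem hUsub (hTU ht))
        have hxJ : x ∈ J := by rw [← h]; exact ⟨hx, hxU⟩
        rw [hue]
        exact SB.mul_mem hTsub (hJT hxJ) ht
      · right
        refine Set.eq_univ_of_forall fun b => ?_
        obtain ⟨x, hx, t, ht, rfl⟩ := hcovm b
        have hIU : I ⊆ U := fun y hy => by
          have : y ∈ I ∩ U := by rw [h]; exact hy
          exact this.2
        exact SB.mul_mem hUsub (hIU hx) (hTU ht)
end

section
/- Let B be a skew left brace and I a proper ideal such that B/I is an abelian brace. Let P be the set of left cosets of I in B (with respect to the multiplicative group). Then the associated solution r_B(a,b) = (λ_a(b), λ_a(b)⁻¹·a·b) of the Yang–Baxter equation satisfies r_B(C × C') = C' × C for all cosets C, C' ∈ P; i.e., (B, r_B) is uniformly P-decomposable. -/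
open SkewBraceDefs

/-- If `I` is a proper ideal of a skew brace `B` with `B/I` abelian, then the
associated solution `r_B(a,b) = (λ_a(b), λ_a(b)⁻¹·a·b)` permutes the left cosets of
`I`: `r_B(C × C') = C' × C` for all cosets `C, C'`; i.e. `(B, r_B)` is uniformly
decomposable with respect to the partition of `B` into left cosets of `I`. -/
theorem statement19 (B : Type*) [SkewBrace B] (I : Set B)
    (hI : IsIdeal I) (hne : I ≠ Set.univ)
    (hab : ∀ a b : B, -(b + a) + (a + b) ∈ I ∧ -(a + b) + a * b ∈ I) :
    ∀ a₀ b₀ : B,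
      (fun p : B × B => (lam p.1 p.2, (lam p.1 p.2)⁻¹ * p.1 * p.2)) ''
          ({x : B | ∃ i ∈ I, x = a₀ * i} ×ˢ {x : B | ∃ i ∈ I, x = b₀ * i}) =
        {x : B | ∃ i ∈ I, x = b₀ * i} ×ˢ {x : B | ∃ i ∈ I, x = a₀ * i} := by

  obtain ⟨⟨A, hA, -⟩, ⟨M, hM, hMn⟩, hlam⟩ := hI
  haveI := hMn
  -- basic membership facts for `I`
  have h1I : (1 : B) ∈ I := by rw [← hM]; exact M.one_mem
  have haddmem : ∀ {x y : B}, x ∈ I → y ∈ I → x + y ∈ I := by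
    intro x y hx hy
    rw [← hA] at hx hy ⊢
    exact A.add_mem hx hy
  -- `0 = 1` in a skew brace
  have h01 : (0 : B) = 1 := by
    have h := SkewBrace.mul_add_dist (1 : B) 0 0
    simp only [add_zero, one_mul, sub_eq_add_neg, zero_add] at h
    rw [← neg_neg (1 : B), ← h, neg_zero]
  -- additive cosets of `I` are contained in multiplicative cosets
  have himp : ∀ y x : B, -y + x ∈ I → y⁻¹ * x ∈ I := by
    intro y x h
    have key : y⁻¹ * x = 1 + lam y⁻¹ (-y + x) := by
      conv_lhs => rw [← add_neg_cancel_left y x]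
      rw [SkewBrace.mul_add_dist, inv_mul_cancel, lam, sub_eq_add_neg, add_assoc]
    rw [key]
    exact haddmem h1I (hlam _ _ h)
  -- the quotient map
  set π : B → B ⧸ M := fun x => (x : B ⧸ M) with hπdef
  have hmul : ∀ x y : B, π (x * y) = π x * π y := fun x y => rfl
  have hinv : ∀ x : B, π x⁻¹ = (π x)⁻¹ := fun x => rfl
  have heqI : ∀ x y : B, π x = π y ↔ x⁻¹ * y ∈ I := by
    intro x y
    rw [← hM]
    exact QuotientGroup.eq
  have hadd : ∀ x y : B, π (x + y) = π x * π y := by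
    intro x y
    rw [← hmul, heqI]
    exact himp _ _ (hab x y).2
  have hcomm' : ∀ x y : B, π (x + y) = π (y + x) := by
    intro x y
    rw [heqI]
    exact himp _ _ (hab y x).1
  have hzero : π 0 = 1 := by rw [h01]; rfl
  have hneg : ∀ x : B, π (-x) = (π x)⁻¹ := by
    intro x
    have : π (-x) * π x = 1 := by rw [← hadd, neg_add_cancel, hzero]
    exact eq_inv_of_mul_eq_one_left this
  have hmulcomm : ∀ x y : B, π x * π y = π y * π x := by
    intro x y
    rw [← hadd, ← hadd, hcomm']
  have hlamπ : ∀ a b : B, π (lam a b) = π b := by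
    intro a b
    rw [lam, hadd, hneg, hmul, inv_mul_cancel_left]
  have memC : ∀ c x : B, (∃ i ∈ I, x = c * i) ↔ π x = π c := by
    intro c x
    constructor
    · rintro ⟨i, hi, rfl⟩
      have hi1 : π i = 1 := by
        rw [← hM] at hi
        exact (QuotientGroup.eq_one_iff i).2 hi
      rw [hmul, hi1, mul_one]
    · intro h
      refine ⟨c⁻¹ * x, ?_, by rw [mul_inv_cancel_left]⟩
      rw [← heqI]
      exact h.symm
  intro a₀ b₀
  ext ⟨u, v⟩
  simp only [Set.mem_image, Set.mem_prod, Set.mem_setOf_eq, memC, Prod.exists, Prod.mk.injEq]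
  constructor
  · rintro ⟨a, b, ⟨ha, hb⟩, h1, h2⟩
    constructor
    · rw [← h1, hlamπ, hb]
    · rw [← h2, hmul, hmul, hinv, hlamπ, mul_assoc, hmulcomm a b, inv_mul_cancel_left, ha]
  · rintro ⟨hu, hv⟩
    refine ⟨u * v - u, (u * v - u)⁻¹ * (u * v), ⟨?_, ?_⟩, ?_, ?_⟩
    · -- π (u*v - u) = π a₀
      rw [sub_eq_add_neg, hadd, hmul, hneg, hmulcomm u v, mul_inv_cancel_right, hv]
    · -- π ((u*v-u)⁻¹ * (u*v)) = π b₀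
      have hπa : π (u * v - u) = π v := by
        rw [sub_eq_add_neg, hadd, hmul, hneg, hmulcomm u v, mul_inv_cancel_right]
      rw [hmul, hinv, hπa, hmul, hmulcomm u v, inv_mul_cancel_left, hu]
    · -- first component of r equals u
      have hab' : (u * v - u) * ((u * v - u)⁻¹ * (u * v)) = u * v := by
        rw [mul_inv_cancel_left]
      rw [lam, hab', sub_eq_add_neg, neg_add_rev, neg_neg, add_assoc, neg_add_cancel, add_zero]
    · -- second component of r equals v
      have hlam' : lam (u * v - u) ((u * v - u)⁻¹ * (u * v)) = u := by
        rw [lam, mul_inv_cancel_left, sub_eq_add_neg, neg_add_rev, neg_neg, add_assoc,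
          neg_add_cancel, add_zero]
      rw [hlam', mul_assoc, mul_inv_cancel_left, inv_mul_cancel_left]
end
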